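/- arXiv:2007.03940 — 8 statements merged into one kernel-verified Lean document; each statement's English description precedes it below -/
import Mathlib

section
/- Adjustment for direct causes: let a joint distribution factorize according to a causal DAG given by parent sets, fix a coordinate i, a value a of the i-th variable, and a coordinate k with k ≠ i and k not a parent of i. Then for every value b, the interventional probability P(X_k = b | do(X_i = a)), defined as the sum over all x with x_i = a and x_k = b of the truncated product ∏_{j ≠ i} q_j(x restricted to pa(j), x_j), equals Σ_w P(PA_i = w) · P(X_k = b | X_i = a, PA_i = w), where the sum ranges over all assignments w of values to the parents of i, and the probabilities on the right are marginals and ratios of marginals of the joint distribution. -/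
open scoped BigOperators Classical

/-- The joint distribution factorizing according to a causal DAG with parent sets `pa`:
`p(x) = ∏ j, q j (x restricted to pa j) (x j)`. -/
noncomputable def dagJoint {n : ℕ} {α : Fin n → Type*} [∀ i, Fintype (α i)]
    (pa : Fin n → Finset (Fin n))
    (q : ∀ j : Fin n, (∀ t : {t // t ∈ pa j}, α t.1) → α j → ℝ)
    (x : ∀ i, α i) : ℝ :=
  ∏ j : Fin n, q j (fun t => x t.1) (x j)

section Aux
set_option linter.unusedSectionVars false
variable {n : ℕ} {α : Fin n → Type*} [∀ i, Fintype (α i)] [∀ i, Nonempty (α i)]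

/-- Truncated sum with constraints `x i = a` and parents of `i` fixed to `w`. -/
noncomputable def Faux (pa : Fin n → Finset (Fin n))
    (q : ∀ j : Fin n, (∀ t : {t // t ∈ pa j}, α t.1) → α j → ℝ)
    (i : Fin n) (S : Finset (Fin n)) (w : ∀ t : {t // t ∈ pa i}, α t.1) (a : α i) : ℝ :=
  ∑ x : ∀ j, α j, if x i = a ∧ (∀ t : {t // t ∈ pa i}, x t.1 = w t) then
    ∏ j ∈ S, q j (fun t => x t.1) (x j) else 0

theorem Faux_swap (pa : Fin n → Finset (Fin n))
    (hpa : ∀ i j : Fin n, i ∈ pa j → i < j)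
    (q : ∀ j : Fin n, (∀ t : {t // t ∈ pa j}, α t.1) → α j → ℝ)
    (i : Fin n) (S : Finset (Fin n)) (hS : ∀ j ∈ S, j < i)
    (w : ∀ t : {t // t ∈ pa i}, α t.1) (a a' : α i) :
    Faux pa q i S w a = Faux pa q i S w a' := by
  classical
  have hinv : Function.Involutive
      (fun x : ∀ j, α j => Function.update x i (Equiv.swap a a' (x i))) := by
    intro x; ext j
    by_cases h : j = i
    · subst h; simp
    · simp [Function.update_of_ne h]
  set e := Function.Involutive.toPerm _ hinv with he_def
  unfold Faux
  refine Fintype.sum_equiv e _ _ ?_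
  intro x
  have hne : ∀ j : Fin n, j ≠ i → e x j = x j := by
    intro j hj
    show Function.update x i (Equiv.swap a a' (x i)) j = x j
    rw [Function.update_of_ne hj]
  have hi : e x i = Equiv.swap a a' (x i) := Function.update_self _ _ _
  have hcond : (e x i = a' ∧ (∀ t : {t // t ∈ pa i}, e x t.1 = w t))
      ↔ (x i = a ∧ (∀ t : {t // t ∈ pa i}, x t.1 = w t)) := by
    have h1 : e x i = a' ↔ x i = a := by
      rw [hi, Equiv.swap_apply_eq_iff, Equiv.swap_apply_right]
    have h2 : ∀ t : {t // t ∈ pa i}, e x t.1 = x t.1 :=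
      fun t => hne t.1 (hpa t.1 i t.2).ne
    constructor
    · rintro ⟨c1, c2⟩; exact ⟨h1.mp c1, fun t => by rw [← h2 t]; exact c2 t⟩
    · rintro ⟨c1, c2⟩; exact ⟨h1.mpr c1, fun t => by rw [h2 t]; exact c2 t⟩
  have hprod : (∏ j ∈ S, q j (fun t => e x t.1) (e x j))
      = ∏ j ∈ S, q j (fun t => x t.1) (x j) := by
    refine Finset.prod_congr rfl ?_
    intro j hj
    have hj' : j < i := hS j hj
    have harg : (fun t : {t // t ∈ pa j} => e x t.1) = fun t : {t // t ∈ pa j} => x t.1 := by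
      funext (t : {t // t ∈ pa j})
      exact hne t.1 (((hpa t.1 j t.2).trans hj').ne)
    rw [harg, hne j hj'.ne]
  rw [if_congr hcond hprod rfl]

theorem Faux_erase (pa : Fin n → Finset (Fin n))
    (hpa : ∀ i j : Fin n, i ∈ pa j → i < j)
    (q : ∀ j : Fin n, (∀ t : {t // t ∈ pa j}, α t.1) → α j → ℝ)
    (hq1 : ∀ j w, ∑ a : α j, q j w a = 1)
    (i : Fin n) (S : Finset (Fin n)) (m : Fin n) (hm : m ∈ S) (him : i < m)
    (hmax : ∀ j ∈ S, j ≤ m)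
    (w : ∀ t : {t // t ∈ pa i}, α t.1) (a : α i) :
    (Fintype.card (α m) : ℝ) * Faux pa q i S w a = Faux pa q i (S.erase m) w a := by
  classical
  set e := Equiv.piSplitAt m α with he_def
  set y₀ : α m := Classical.arbitrary (α m) with hy0
  have hsymm_ne : ∀ (y : α m) (z : ∀ j : {j // j ≠ m}, α j) (j : Fin n) (hj : j ≠ m),
      e.symm (y, z) j = z ⟨j, hj⟩ := by
    intro y z j hj
    simp [he_def, Equiv.piSplitAt, dif_neg hj]
  have hsymm_m : ∀ (y : α m) (z : ∀ j : {j // j ≠ m}, α j), e.symm (y, z) m = y := by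
    intro y z
    simp [he_def, Equiv.piSplitAt]
  have hgen : ∀ f : (∀ j, α j) → ℝ,
      (∑ x : ∀ j, α j, f x) = ∑ z : ∀ j : {j // j ≠ m}, α j, ∑ y : α m, f (e.symm (y, z)) := by
    intro f
    rw [← Equiv.sum_comp e.symm f, Fintype.sum_prod_type, Finset.sum_comm]
  have hcond : ∀ (y y' : α m) (z : ∀ j : {j // j ≠ m}, α j),
      ((e.symm (y, z)) i = a ∧ (∀ t : {t // t ∈ pa i}, (e.symm (y, z)) t.1 = w t)) ↔
      ((e.symm (y', z)) i = a ∧ (∀ t : {t // t ∈ pa i}, (e.symm (y', z)) t.1 = w t)) := by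
    intro y y' z
    have h1 : (e.symm (y, z)) i = (e.symm (y', z)) i := by
      rw [hsymm_ne y z i him.ne, hsymm_ne y' z i him.ne]
    have h2 : ∀ t : {t // t ∈ pa i}, (e.symm (y, z)) t.1 = (e.symm (y', z)) t.1 := by
      intro t
      have : t.1 ≠ m := ((hpa t.1 i t.2).trans him).ne
      rw [hsymm_ne y z t.1 this, hsymm_ne y' z t.1 this]
    rw [h1]
    exact and_congr Iff.rfl (forall_congr' fun t => by rw [h2 t])
  have hprod : ∀ (y y' : α m) (z : ∀ j : {j // j ≠ m}, α j),
      (∏ j ∈ S.erase m, q j (fun t => (e.symm (y, z)) t.1) ((e.symm (y, z)) j)) =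
      ∏ j ∈ S.erase m, q j (fun t => (e.symm (y', z)) t.1) ((e.symm (y', z)) j) := by
    intro y y' z
    refine Finset.prod_congr rfl ?_
    intro j hj
    have hjm : j ≠ m := Finset.ne_of_mem_erase hj
    have hjle : j ≤ m := hmax j (Finset.mem_of_mem_erase hj)
    have harg : (fun t : {t // t ∈ pa j} => (e.symm (y, z)) t.1)
        = fun t : {t // t ∈ pa j} => (e.symm (y', z)) t.1 := by
      funext (t : {t // t ∈ pa j})
      have htm : t.1 ≠ m := (lt_of_lt_of_le (hpa t.1 j t.2) hjle).ne
      rw [hsymm_ne y z t.1 htm, hsymm_ne y' z t.1 htm]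
    rw [harg, hsymm_ne y z j hjm, hsymm_ne y' z j hjm]
  have hqmarg : ∀ (y : α m) (z : ∀ j : {j // j ≠ m}, α j),
      (fun t : {t // t ∈ pa m} => (e.symm (y, z)) t.1)
        = fun t : {t // t ∈ pa m} => (e.symm (y₀, z)) t.1 := by
    intro y z
    funext (t : {t // t ∈ pa m})
    have htm : t.1 ≠ m := (hpa t.1 m t.2).ne
    rw [hsymm_ne y z t.1 htm, hsymm_ne y₀ z t.1 htm]
  unfold Faux
  rw [hgen, hgen]
  rw [Finset.mul_sum]
  refine Finset.sum_congr rfl ?_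
  intro z _
  have hR : ∀ y : α m,
      (if (e.symm (y, z)) i = a ∧ (∀ t : {t // t ∈ pa i}, (e.symm (y, z)) t.1 = w t) then
        ∏ j ∈ S.erase m, q j (fun t => (e.symm (y, z)) t.1) ((e.symm (y, z)) j) else 0)
      = (if (e.symm (y₀, z)) i = a ∧ (∀ t : {t // t ∈ pa i}, (e.symm (y₀, z)) t.1 = w t) then
        ∏ j ∈ S.erase m, q j (fun t => (e.symm (y₀, z)) t.1) ((e.symm (y₀, z)) j) else 0) := by
    intro y
    rw [if_congr (hcond y y₀ z) (hprod y y₀ z) rfl]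
  have hL : ∀ y : α m,
      (if (e.symm (y, z)) i = a ∧ (∀ t : {t // t ∈ pa i}, (e.symm (y, z)) t.1 = w t) then
        ∏ j ∈ S, q j (fun t => (e.symm (y, z)) t.1) ((e.symm (y, z)) j) else 0)
      = q m (fun t => (e.symm (y₀, z)) t.1) y *
        (if (e.symm (y₀, z)) i = a ∧ (∀ t : {t // t ∈ pa i}, (e.symm (y₀, z)) t.1 = w t) then
        ∏ j ∈ S.erase m, q j (fun t => (e.symm (y₀, z)) t.1) ((e.symm (y₀, z)) j) else 0) := by
    intro y
    have hsplit : (∏ j ∈ S, q j (fun t => (e.symm (y, z)) t.1) ((e.symm (y, z)) j))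
        = q m (fun t => (e.symm (y₀, z)) t.1) y *
          ∏ j ∈ S.erase m, q j (fun t => (e.symm (y₀, z)) t.1) ((e.symm (y₀, z)) j) := by
      rw [← Finset.mul_prod_erase S _ hm, hqmarg y z, hsymm_m y z, hprod y y₀ z]
    rw [if_congr (hcond y y₀ z) hsplit rfl, mul_ite, mul_zero]
  calc (Fintype.card (α m) : ℝ) * ∑ y : α m,
        (if (e.symm (y, z)) i = a ∧ (∀ t : {t // t ∈ pa i}, (e.symm (y, z)) t.1 = w t) then
          ∏ j ∈ S, q j (fun t => (e.symm (y, z)) t.1) ((e.symm (y, z)) j) else 0)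
      = (Fintype.card (α m) : ℝ) * ∑ y : α m, q m (fun t => (e.symm (y₀, z)) t.1) y *
        (if (e.symm (y₀, z)) i = a ∧ (∀ t : {t // t ∈ pa i}, (e.symm (y₀, z)) t.1 = w t) then
          ∏ j ∈ S.erase m, q j (fun t => (e.symm (y₀, z)) t.1) ((e.symm (y₀, z)) j) else 0) := by
        rw [Finset.sum_congr rfl fun y _ => hL y]
    _ = (Fintype.card (α m) : ℝ) *
        (if (e.symm (y₀, z)) i = a ∧ (∀ t : {t // t ∈ pa i}, (e.symm (y₀, z)) t.1 = w t) then
          ∏ j ∈ S.erase m, q j (fun t => (e.symm (y₀, z)) t.1) ((e.symm (y₀, z)) j) else 0) := by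
        rw [← Finset.sum_mul, hq1 m _, one_mul]
    _ = ∑ y : α m,
        (if (e.symm (y, z)) i = a ∧ (∀ t : {t // t ∈ pa i}, (e.symm (y, z)) t.1 = w t) then
          ∏ j ∈ S.erase m, q j (fun t => (e.symm (y, z)) t.1) ((e.symm (y, z)) j) else 0) := by
        rw [Finset.sum_congr rfl fun y _ => hR y, Finset.sum_const, Finset.card_univ,
          nsmul_eq_mul]

theorem Faux_indep (pa : Fin n → Finset (Fin n))
    (hpa : ∀ i j : Fin n, i ∈ pa j → i < j)
    (q : ∀ j : Fin n, (∀ t : {t // t ∈ pa j}, α t.1) → α j → ℝ)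
    (hq1 : ∀ j w, ∑ a : α j, q j w a = 1)
    (i : Fin n) (S : Finset (Fin n)) (hiS : i ∉ S)
    (w : ∀ t : {t // t ∈ pa i}, α t.1) (a a' : α i) :
    Faux pa q i S w a = Faux pa q i S w a' := by
  classical
  induction S using Finset.strongInduction with
  | _ S ih =>
    by_cases hall : ∀ j ∈ S, j < i
    · exact Faux_swap pa hpa q i S hall w a a'
    · push_neg at hall
      obtain ⟨j₀, hj₀S, hj₀⟩ := hall
      have hSne : S.Nonempty := ⟨j₀, hj₀S⟩
      set m := S.max' hSne with hm_def
      have hmS : m ∈ S := S.max'_mem hSne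
      have him : i < m := by
        have h1 : j₀ ≤ m := S.le_max' j₀ hj₀S
        have hij₀ : i < j₀ := lt_of_le_of_ne hj₀ (fun h => hiS (h ▸ hj₀S))
        exact lt_of_lt_of_le hij₀ h1
      have hmax : ∀ j ∈ S, j ≤ m := fun j hj => S.le_max' j hj
      have hcard : (Fintype.card (α m) : ℝ) ≠ 0 := by
        exact_mod_cast (Fintype.card_pos (α := α m)).ne'
      have h1 := Faux_erase pa hpa q hq1 i S m hmS him hmax w a
      have h2 := Faux_erase pa hpa q hq1 i S m hmS him hmax w a'
      have h3 : Faux pa q i (S.erase m) w a = Faux pa q i (S.erase m) w a' :=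
        ih (S.erase m) (Finset.erase_ssubset hmS) (fun h => hiS (Finset.mem_of_mem_erase h))
      exact mul_left_cancel₀ hcard (h1.trans (h3.trans h2.symm))

theorem exists_ext (pa : Fin n → Finset (Fin n))
    (hpa : ∀ i j : Fin n, i ∈ pa j → i < j)
    (i : Fin n) (w : ∀ t : {t // t ∈ pa i}, α t.1) (a : α i) :
    ∃ x : ∀ j, α j, x i = a ∧ ∀ t : {t // t ∈ pa i}, x t.1 = w t := by
  classical
  refine ⟨Function.update
    (fun j => if h : j ∈ pa i then w ⟨j, h⟩ else Classical.arbitrary (α j)) i a, ?_, ?_⟩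
  · exact Function.update_self _ _ _
  · intro t
    rw [Function.update_of_ne (hpa t.1 i t.2).ne]
    simp [t.2]

theorem dagJoint_split (pa : Fin n → Finset (Fin n))
    (q : ∀ j : Fin n, (∀ t : {t // t ∈ pa j}, α t.1) → α j → ℝ)
    (i : Fin n) (w : ∀ t : {t // t ∈ pa i}, α t.1) (a : α i)
    (x : ∀ j, α j) (h1 : x i = a) (h2 : ∀ t : {t // t ∈ pa i}, x t.1 = w t) :
    dagJoint pa q x = q i w a * ∏ j ∈ Finset.univ.erase i, q j (fun t => x t.1) (x j) := by
  have harg : (fun t : {t // t ∈ pa i} => x t.1) = w := by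
    funext (t : {t // t ∈ pa i}); exact h2 t
  rw [dagJoint, ← Finset.mul_prod_erase Finset.univ _ (Finset.mem_univ i), harg, h1]

theorem marg (pa : Fin n → Finset (Fin n))
    (hpa : ∀ i j : Fin n, i ∈ pa j → i < j)
    (q : ∀ j : Fin n, (∀ t : {t // t ∈ pa j}, α t.1) → α j → ℝ)
    (hq1 : ∀ j w, ∑ a : α j, q j w a = 1)
    (i : Fin n) (w : ∀ t : {t // t ∈ pa i}, α t.1) (a : α i) :
    (∑ x : ∀ j, α j, if x i = a ∧ (∀ t : {t // t ∈ pa i}, x t.1 = w t) then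
      dagJoint pa q x else 0)
    = q i w a * (∑ x : ∀ j, α j, if (∀ t : {t // t ∈ pa i}, x t.1 = w t) then
      dagJoint pa q x else 0) := by
  classical
  have hFaux : ∀ (a a' : α i),
      Faux pa q i (Finset.univ.erase i) w a = Faux pa q i (Finset.univ.erase i) w a' :=
    fun a a' => Faux_indep pa hpa q hq1 i _ (Finset.notMem_erase i _) w a a'
  have key : ∀ a' : α i,
      (∑ x : ∀ j, α j, if x i = a' ∧ (∀ t : {t // t ∈ pa i}, x t.1 = w t) then
        dagJoint pa q x else 0) = q i w a' * Faux pa q i (Finset.univ.erase i) w a' := by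
    intro a'
    rw [Faux, Finset.mul_sum]
    refine Finset.sum_congr rfl fun x _ => ?_
    by_cases h : x i = a' ∧ (∀ t : {t // t ∈ pa i}, x t.1 = w t)
    · rw [if_pos h, if_pos h, dagJoint_split pa q i w a' x h.1 h.2]
    · rw [if_neg h, if_neg h, mul_zero]
  have hpart : (∑ x : ∀ j, α j, if (∀ t : {t // t ∈ pa i}, x t.1 = w t) then
      dagJoint pa q x else 0)
      = ∑ a' : α i, ∑ x : ∀ j, α j, if x i = a' ∧ (∀ t : {t // t ∈ pa i}, x t.1 = w t) then
        dagJoint pa q x else 0 := by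
    rw [Finset.sum_comm]
    refine Finset.sum_congr rfl fun x _ => ?_
    have h4 : ∀ a' : α i, (if x i = a' ∧ (∀ t : {t // t ∈ pa i}, x t.1 = w t) then
        dagJoint pa q x else 0)
        = if x i = a' then (if (∀ t : {t // t ∈ pa i}, x t.1 = w t) then
          dagJoint pa q x else 0) else 0 := by
      intro a'; rw [ite_and]
    rw [Finset.sum_congr rfl fun a' _ => h4 a']
    rw [Finset.sum_ite_eq Finset.univ (x i) (fun a' => if (∀ t : {t // t ∈ pa i}, x t.1 = w t)
      then dagJoint pa q x else 0), if_pos (Finset.mem_univ _)]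
  rw [key a, hpart]
  have h5 : ∀ a' : α i, (∑ x : ∀ j, α j, if x i = a' ∧ (∀ t : {t // t ∈ pa i}, x t.1 = w t) then
      dagJoint pa q x else 0) = q i w a' * Faux pa q i (Finset.univ.erase i) w a := by
    intro a'; rw [key a', hFaux a' a]
  rw [Finset.sum_congr rfl fun a' _ => h5 a', ← Finset.sum_mul, hq1 i w, one_mul]

end Aux

/-- Adjusting for direct causes: if the joint distribution factorizes according to a
causal DAG, `i` is a coordinate, `a` a value of `X i`, and `k ≠ i` a coordinate that is
not a parent of `i`, then the interventional probability `P(X k = b | do(X i = a))`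
(defined by the truncated factorization) equals
`Σ_w P(PA i = w) * P(X k = b | X i = a, PA i = w)`. -/
theorem adjustment_for_direct_causes {n : ℕ} {α : Fin n → Type*}
    [∀ i, Fintype (α i)] [∀ i, Nonempty (α i)]
    (pa : Fin n → Finset (Fin n))
    (hpa : ∀ i j : Fin n, i ∈ pa j → i < j)
    (q : ∀ j : Fin n, (∀ t : {t // t ∈ pa j}, α t.1) → α j → ℝ)
    (hq0 : ∀ j w a, 0 ≤ q j w a)
    (hq1 : ∀ j w, ∑ a : α j, q j w a = 1)
    (hpos : ∀ x : ∀ i, α i, 0 < dagJoint pa q x)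
    (i : Fin n) (a : α i) (k : Fin n) (hki : k ≠ i) (hkpa : k ∉ pa i) (b : α k) :
    (∑ x : ∀ j, α j, if x i = a ∧ x k = b then
        ∏ j ∈ Finset.univ.erase i, q j (fun t => x t.1) (x j) else 0) =
    ∑ w : ∀ t : {t // t ∈ pa i}, α t.1,
      (∑ x : ∀ j, α j, if (∀ t : {t // t ∈ pa i}, x t.1 = w t) then dagJoint pa q x else 0) *
      ((∑ x : ∀ j, α j, if x k = b ∧ x i = a ∧ (∀ t : {t // t ∈ pa i}, x t.1 = w t) then
            dagJoint pa q x else 0) /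
       (∑ x : ∀ j, α j, if x i = a ∧ (∀ t : {t // t ∈ pa i}, x t.1 = w t) then
            dagJoint pa q x else 0)) := by

  classical
  have pnn : ∀ x : ∀ j, α j, 0 ≤ dagJoint pa q x :=
    fun x => Finset.prod_nonneg fun j _ => hq0 _ _ _
  -- Step 1 : partition the LHS by the value of the parents of i
  have hLHS : (∑ x : ∀ j, α j, if x i = a ∧ x k = b then
        ∏ j ∈ Finset.univ.erase i, q j (fun t => x t.1) (x j) else 0)
      = ∑ w : ∀ t : {t // t ∈ pa i}, α t.1, ∑ x : ∀ j, α j,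
          if x i = a ∧ x k = b ∧ (∀ t : {t // t ∈ pa i}, x t.1 = w t) then
            ∏ j ∈ Finset.univ.erase i, q j (fun t => x t.1) (x j) else 0 := by
    rw [Finset.sum_comm]
    refine Finset.sum_congr rfl fun x _ => ?_
    have h4 : ∀ w : ∀ t : {t // t ∈ pa i}, α t.1,
        (if x i = a ∧ x k = b ∧ (∀ t : {t // t ∈ pa i}, x t.1 = w t) then
          ∏ j ∈ Finset.univ.erase i, q j (fun t => x t.1) (x j) else 0)
        = if (fun t : {t // t ∈ pa i} => x t.1) = w then
            (if x i = a ∧ x k = b then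
              ∏ j ∈ Finset.univ.erase i, q j (fun t => x t.1) (x j) else 0) else 0 := by
      intro w
      have hiff : (x i = a ∧ x k = b ∧ (∀ t : {t // t ∈ pa i}, x t.1 = w t))
          ↔ ((fun t : {t // t ∈ pa i} => x t.1) = w ∧ (x i = a ∧ x k = b)) := by
        rw [funext_iff]
        tauto
      rw [if_congr hiff rfl rfl, ite_and]
    rw [Finset.sum_congr rfl fun w _ => h4 w,
      Finset.sum_ite_eq Finset.univ (fun t : {t // t ∈ pa i} => x t.1) _,
      if_pos (Finset.mem_univ _)]
  rw [hLHS]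
  refine Finset.sum_congr rfl fun w _ => ?_
  -- notation
  set N : ℝ := ∑ x : ∀ j, α j, if (∀ t : {t // t ∈ pa i}, x t.1 = w t)
    then dagJoint pa q x else 0 with hN_def
  set Nkb : ℝ := ∑ x : ∀ j, α j, if x k = b ∧ x i = a ∧ (∀ t : {t // t ∈ pa i}, x t.1 = w t)
    then dagJoint pa q x else 0 with hNkb_def
  obtain ⟨x₀, hx1, hx2⟩ := exists_ext pa hpa i w a
  have hqv : 0 < q i w a := by
    have h := hpos x₀
    rw [dagJoint_split pa q i w a x₀ hx1 hx2] at h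
    rcases (hq0 i w a).lt_or_eq with h' | h'
    · exact h'
    · rw [← h', zero_mul] at h; exact absurd h (lt_irrefl 0)
  have hN : 0 < N := by
    rw [hN_def]
    refine Finset.sum_pos' (fun x _ => ?_) ⟨x₀, Finset.mem_univ _, ?_⟩
    · split
      · exact pnn x
      · exact le_rfl
    · rw [if_pos hx2]; exact hpos x₀
  have hNa : (∑ x : ∀ j, α j, if x i = a ∧ (∀ t : {t // t ∈ pa i}, x t.1 = w t) then
      dagJoint pa q x else 0) = q i w a * N := marg pa hpa q hq1 i w a
  rw [hNa]
  have hRHS : N * (Nkb / (q i w a * N)) = Nkb / q i w a := by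
    field_simp
  rw [hRHS]
  -- LHS per w equals Nkb / q i w a
  rw [hNkb_def, Finset.sum_div]
  refine Finset.sum_congr rfl fun x _ => ?_
  by_cases hc : x i = a ∧ x k = b ∧ (∀ t : {t // t ∈ pa i}, x t.1 = w t)
  · have hc' : x k = b ∧ x i = a ∧ (∀ t : {t // t ∈ pa i}, x t.1 = w t) :=
      ⟨hc.2.1, hc.1, hc.2.2⟩
    rw [if_pos hc, if_pos hc', eq_div_iff hqv.ne', mul_comm,
      ← dagJoint_split pa q i w a x hc.1 hc.2.2]
  · have hc' : ¬(x k = b ∧ x i = a ∧ (∀ t : {t // t ∈ pa i}, x t.1 = w t)) := by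
      tauto
    rw [if_neg hc, if_neg hc', zero_div]
end

section
/- Back-door adjustment for the graph U → Z → X → Y with confounder U → Y (U unobserved): for every x with P(X = x, Z = z) > 0 for all z, and every y, the interventional probability P(y | do(x)) := Σ_{u,z} qU(u) · qZ(u, z) · qY(x, u, y) equals Σ_z P(Z = z) · P(Y = y | X = x, Z = z), where the probabilities on the right are marginals and ratios of marginals of the joint distribution over the observed variables. -/
open scoped BigOperators

/-- Back-door adjustment for the graph `U → Z → X → Y` with confounder `U → Y`
(`U` unobserved), joint distribution `p(u,z,x,y) = qU u * qZ u z * qX z x * qY x u y`.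
If `P(X = x, Z = z) > 0` for all `z`, then the interventional probability
`P(y | do(x)) = Σ_{u,z} qU u * qZ u z * qY x u y` equals the back-door adjustment
`Σ_z P(Z = z) * P(Y = y | X = x, Z = z)`. -/
theorem backdoor_adjustment
    {U Z X Y : Type*} [Fintype U] [Fintype Z] [Fintype X] [Fintype Y]
    [Nonempty U] [Nonempty Z] [Nonempty X] [Nonempty Y]
    (qU : U → ℝ) (qZ : U → Z → ℝ) (qX : Z → X → ℝ) (qY : X → U → Y → ℝ)
    (hqU : ∀ u, 0 ≤ qU u) (hqZ : ∀ u z, 0 ≤ qZ u z)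
    (hqX : ∀ z x, 0 ≤ qX z x) (hqY : ∀ x u y, 0 ≤ qY x u y)
    (hUsum : ∑ u, qU u = 1)
    (hZsum : ∀ u, ∑ z, qZ u z = 1)
    (hXsum : ∀ z, ∑ x, qX z x = 1)
    (hYsum : ∀ x u, ∑ y, qY x u y = 1)
    (x : X) (hx : ∀ z, 0 < ∑ u, ∑ y', qU u * qZ u z * qX z x * qY x u y')
    (y : Y) :
    (∑ u, ∑ z, qU u * qZ u z * qY x u y) =
      ∑ z, (∑ u, ∑ x', ∑ y', qU u * qZ u z * qX z x' * qY x' u y') *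
        ((∑ u, qU u * qZ u z * qX z x * qY x u y) /
         (∑ u, ∑ y', qU u * qZ u z * qX z x * qY x u y')) := by
  rw [Finset.sum_comm]
  apply Finset.sum_congr rfl
  intro z _
  have hd : ∑ u, ∑ y', qU u * qZ u z * qX z x * qY x u y'
      = qX z x * ∑ u, qU u * qZ u z := by
    rw [Finset.mul_sum]
    apply Finset.sum_congr rfl
    intro u _
    rw [← Finset.mul_sum, hYsum]
    ring
  have hmarg : (∑ u, ∑ x', ∑ y', qU u * qZ u z * qX z x' * qY x' u y')
      = ∑ u, qU u * qZ u z := by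
    apply Finset.sum_congr rfl
    intro u _
    have : ∀ x', ∑ y', qU u * qZ u z * qX z x' * qY x' u y'
        = qU u * qZ u z * qX z x' := by
      intro x'
      rw [← Finset.mul_sum, hYsum, mul_one]
    simp only [this, ← Finset.mul_sum, hXsum, mul_one]
  have hnum : (∑ u, qU u * qZ u z * qX z x * qY x u y)
      = qX z x * ∑ u, qU u * qZ u z * qY x u y := by
    rw [Finset.mul_sum]; apply Finset.sum_congr rfl; intro u _; ring
  have hpos := hx z
  rw [hd] at hpos ⊢
  rw [hmarg, hnum]
  have hqx : qX z x ≠ 0 := by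
    intro h; rw [h, zero_mul] at hpos; exact lt_irrefl 0 hpos
  have hA : (∑ u, qU u * qZ u z) ≠ 0 := by
    intro h; rw [h, mul_zero] at hpos; exact lt_irrefl 0 hpos
  field_simp
end

section
/- Front-door formula: in the graph U → X → Z → Y with confounder U → Y (U unobserved), assuming P(X = x', Z = z) > 0 for all x', z, one has for all x, y: P(y | do(x)) = Σ_z P(Z = z | X = x) · Σ_{x'} P(Y = y | X = x', Z = z) · P(X = x'), where the probabilities on the right are marginals and ratios of marginals of the joint distribution over the observed variables X, Z, Y. -/
open scoped BigOperators

/-- Front-door formula for the graph `U → X → Z → Y` with confounder `U → Y`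
(`U` unobserved), joint distribution `p(u,x,z,y) = qU u * qX u x * qZ x z * qY z u y`.
Assuming `P(X = x', Z = z) > 0` for all `x'`, `z`, the interventional probability
`P(y | do(x)) = Σ_z Σ_u qU u * qZ x z * qY z u y` equals
`Σ_z P(Z = z | X = x) * Σ_{x'} P(Y = y | X = x', Z = z) * P(X = x')`. -/
theorem front_door_formula
    {U X Z Y : Type*} [Fintype U] [Fintype X] [Fintype Z] [Fintype Y]
    [Nonempty U] [Nonempty X] [Nonempty Z] [Nonempty Y]
    (qU : U → ℝ) (qX : U → X → ℝ) (qZ : X → Z → ℝ) (qY : Z → U → Y → ℝ)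
    (hqU : ∀ u, 0 ≤ qU u) (hqX : ∀ u x, 0 ≤ qX u x)
    (hqZ : ∀ x z, 0 ≤ qZ x z) (hqY : ∀ z u y, 0 ≤ qY z u y)
    (hUsum : ∑ u, qU u = 1)
    (hXsum : ∀ u, ∑ x, qX u x = 1)
    (hZsum : ∀ x, ∑ z, qZ x z = 1)
    (hYsum : ∀ z u, ∑ y, qY z u y = 1)
    (hpos : ∀ (x' : X) (z : Z), 0 < ∑ u, ∑ y', qU u * qX u x' * qZ x' z * qY z u y')
    (x : X) (y : Y) :
    (∑ z, ∑ u, qU u * qZ x z * qY z u y) =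
      ∑ z, ((∑ u, ∑ y', qU u * qX u x * qZ x z * qY z u y') /
              (∑ u, ∑ z', ∑ y', qU u * qX u x * qZ x z' * qY z' u y')) *
        ∑ x', ((∑ u, qU u * qX u x' * qZ x' z * qY z u y) /
                 (∑ u, ∑ y', qU u * qX u x' * qZ x' z * qY z u y')) *
          (∑ u, ∑ z', ∑ y', qU u * qX u x' * qZ x' z' * qY z' u y') := by
  set A : X → ℝ := fun x' => ∑ u, qU u * qX u x' with hAdef
  -- P(X = x')
  have key1 : ∀ x' : X,
      (∑ u, ∑ z', ∑ y', qU u * qX u x' * qZ x' z' * qY z' u y') = A x' := by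
    intro x'
    simp only [hAdef, mul_assoc, ← Finset.mul_sum, hYsum, hZsum, mul_one]
  -- P(X = x', Z = z)
  have key2 : ∀ (x' : X) (z : Z),
      (∑ u, ∑ y', qU u * qX u x' * qZ x' z * qY z u y') = A x' * qZ x' z := by
    intro x' z
    simp only [hAdef, mul_assoc, ← Finset.mul_sum, hYsum, mul_one, Finset.sum_mul]
  -- P(X = x', Z = z, Y = y)
  have key3 : ∀ (x' : X) (z : Z),
      (∑ u, qU u * qX u x' * qZ x' z * qY z u y)
        = qZ x' z * ∑ u, qU u * qX u x' * qY z u y := by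
    intro x' z
    rw [Finset.mul_sum]
    exact Finset.sum_congr rfl fun u _ => by ring
  have hApos : ∀ x' : X, 0 < A x' := by
    intro x'
    have h := hpos x' (Classical.arbitrary Z)
    rw [key2] at h
    rcases (hAdef ▸ (Finset.sum_nonneg fun u _ => mul_nonneg (hqU u) (hqX u x')) :
        (0:ℝ) ≤ A x').lt_or_eq with h1 | h1
    · exact h1
    · exfalso; rw [← h1, zero_mul] at h; exact lt_irrefl 0 h
  have hZpos : ∀ (x' : X) (z : Z), 0 < qZ x' z := by
    intro x' z
    have h := hpos x' z
    rw [key2] at h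
    rcases (hqZ x' z).lt_or_eq with h1 | h1
    · exact h1
    · exfalso; rw [← h1, mul_zero] at h; exact lt_irrefl 0 h
  have hrhs : ∀ z : Z,
      ((∑ u, ∑ y', qU u * qX u x * qZ x z * qY z u y') /
              (∑ u, ∑ z', ∑ y', qU u * qX u x * qZ x z' * qY z' u y')) *
        (∑ x', ((∑ u, qU u * qX u x' * qZ x' z * qY z u y) /
                 (∑ u, ∑ y', qU u * qX u x' * qZ x' z * qY z u y')) *
          (∑ u, ∑ z', ∑ y', qU u * qX u x' * qZ x' z' * qY z' u y'))
      = qZ x z * ∑ x', ∑ u, qU u * qX u x' * qY z u y := by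
    intro z
    rw [key1, key2]
    have h1 : A x * qZ x z / A x = qZ x z := by
      rw [mul_comm, mul_div_assoc, div_self (hApos x).ne', mul_one]
    rw [h1, Finset.mul_sum, Finset.mul_sum]
    refine Finset.sum_congr rfl fun x' _ => ?_
    rw [key1, key2, key3]
    have h2 : qZ x' z * (∑ u, qU u * qX u x' * qY z u y) / (A x' * qZ x' z) * A x'
        = ∑ u, qU u * qX u x' * qY z u y := by
      rw [div_mul_eq_mul_div, div_eq_iff (mul_pos (hApos x') (hZpos x' z)).ne']
      ring
    rw [h2]
  rw [Finset.sum_congr rfl fun z _ => hrhs z]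
  refine Finset.sum_congr rfl fun z _ => ?_
  rw [Finset.sum_comm, Finset.mul_sum]
  refine Finset.sum_congr rfl fun u _ => ?_
  rw [← Finset.sum_mul, ← Finset.mul_sum, hXsum, mul_one]
  ring
end

section
/- In the graph U → X → Z → Y with confounder U → Y (U unobserved), intervening on X has the same effect on Z as observing X: for every x with P(X = x) > 0 and every z, P(z | do(x)) := Σ_{u,y} qU(u) · qZ(x, z) · qY(z, u, y) equals P(Z = z | X = x), the conditional probability computed from the joint distribution. -/
open scoped BigOperators

/-- In the graph `U → X → Z → Y` with confounder `U → Y` (`U` unobserved), joint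
distribution `p(u,x,z,y) = qU u * qX u x * qZ x z * qY z u y`, intervening on `X` has
the same effect on `Z` as observing `X`: if `P(X = x) > 0`, then
`P(z | do(x)) = Σ_{u,y} qU u * qZ x z * qY z u y` equals `P(Z = z | X = x)`. -/
theorem intervention_equals_observation_on_Z
    {U X Z Y : Type*} [Fintype U] [Fintype X] [Fintype Z] [Fintype Y]
    [Nonempty U] [Nonempty X] [Nonempty Z] [Nonempty Y]
    (qU : U → ℝ) (qX : U → X → ℝ) (qZ : X → Z → ℝ) (qY : Z → U → Y → ℝ)
    (hqU : ∀ u, 0 ≤ qU u) (hqX : ∀ u x, 0 ≤ qX u x)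
    (hqZ : ∀ x z, 0 ≤ qZ x z) (hqY : ∀ z u y, 0 ≤ qY z u y)
    (hUsum : ∑ u, qU u = 1)
    (hXsum : ∀ u, ∑ x, qX u x = 1)
    (hZsum : ∀ x, ∑ z, qZ x z = 1)
    (hYsum : ∀ z u, ∑ y, qY z u y = 1)
    (x : X) (hx : 0 < ∑ u, ∑ z', ∑ y', qU u * qX u x * qZ x z' * qY z' u y')
    (z : Z) :
    (∑ u, ∑ y, qU u * qZ x z * qY z u y) =
      (∑ u, ∑ y', qU u * qX u x * qZ x z * qY z u y') /
        (∑ u, ∑ z', ∑ y', qU u * qX u x * qZ x z' * qY z' u y') := by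
  have hden : (∑ u, ∑ z', ∑ y', qU u * qX u x * qZ x z' * qY z' u y')
      = ∑ u, qU u * qX u x := by
    refine Finset.sum_congr rfl fun u _ => ?_
    simp only [mul_assoc, ← Finset.mul_sum, hYsum, mul_one, hZsum]
  have hnum : (∑ u, ∑ y', qU u * qX u x * qZ x z * qY z u y')
      = qZ x z * ∑ u, qU u * qX u x := by
    rw [Finset.mul_sum]
    refine Finset.sum_congr rfl fun u _ => ?_
    simp only [mul_assoc, ← Finset.mul_sum, hYsum, mul_one]; ring
  have hlhs : (∑ u, ∑ y, qU u * qZ x z * qY z u y) = qZ x z := by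
    have : ∀ u, (∑ y, qU u * qZ x z * qY z u y) = qU u * qZ x z := by
      intro u; simp only [mul_assoc, ← Finset.mul_sum, hYsum, mul_one]
    simp only [this, ← Finset.sum_mul, hUsum, one_mul]
  rw [hlhs, hnum, hden]
  rw [hden] at hx
  field_simp
end

section
/- In the graph U → X → Z → Y with confounder U → Y (U unobserved), assuming P(X = x', Z = z) > 0 for all x', the interventional probability P(y | do(z)) := Σ_{u,x} qU(u) · qX(u, x) · qY(z, u, y) equals Σ_{x'} P(Y = y | X = x', Z = z) · P(X = x'), where the probabilities on the right are marginals and ratios of marginals of the joint distribution over the observed variables. -/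
open scoped BigOperators

/-- In the graph `U → X → Z → Y` with confounder `U → Y` (`U` unobserved), joint
distribution `p(u,x,z,y) = qU u * qX u x * qZ x z * qY z u y`, assuming
`P(X = x', Z = z) > 0` for all `x'`, the interventional probability
`P(y | do(z)) = Σ_{u,x} qU u * qX u x * qY z u y` equals
`Σ_{x'} P(Y = y | X = x', Z = z) * P(X = x')`. -/
theorem do_z_adjustment
    {U X Z Y : Type*} [Fintype U] [Fintype X] [Fintype Z] [Fintype Y]
    [Nonempty U] [Nonempty X] [Nonempty Z] [Nonempty Y]
    (qU : U → ℝ) (qX : U → X → ℝ) (qZ : X → Z → ℝ) (qY : Z → U → Y → ℝ)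
    (hqU : ∀ u, 0 ≤ qU u) (hqX : ∀ u x, 0 ≤ qX u x)
    (hqZ : ∀ x z, 0 ≤ qZ x z) (hqY : ∀ z u y, 0 ≤ qY z u y)
    (hUsum : ∑ u, qU u = 1)
    (hXsum : ∀ u, ∑ x, qX u x = 1)
    (hZsum : ∀ x, ∑ z, qZ x z = 1)
    (hYsum : ∀ z u, ∑ y, qY z u y = 1)
    (z : Z) (hz : ∀ x', 0 < ∑ u, ∑ y', qU u * qX u x' * qZ x' z * qY z u y')
    (y : Y) :
    (∑ u, ∑ x, qU u * qX u x * qY z u y) =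
      ∑ x', ((∑ u, qU u * qX u x' * qZ x' z * qY z u y) /
               (∑ u, ∑ y', qU u * qX u x' * qZ x' z * qY z u y')) *
        (∑ u, ∑ z', ∑ y', qU u * qX u x' * qZ x' z' * qY z' u y') := by
  have keyN : ∀ x', (∑ u, qU u * qX u x' * qZ x' z * qY z u y)
      = qZ x' z * ∑ u, qU u * qX u x' * qY z u y := by
    intro x'
    rw [Finset.mul_sum]
    exact Finset.sum_congr rfl fun u _ => by ring
  have keyD : ∀ x', (∑ u, ∑ y', qU u * qX u x' * qZ x' z * qY z u y')
      = qZ x' z * ∑ u, qU u * qX u x' := by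
    intro x'
    rw [Finset.mul_sum]
    refine Finset.sum_congr rfl fun u _ => ?_
    have : (∑ y', qU u * qX u x' * qZ x' z * qY z u y')
        = qU u * qX u x' * qZ x' z * ∑ y', qY z u y' := by
      rw [Finset.mul_sum]
    rw [this, hYsum]; ring
  have keyP : ∀ x', (∑ u, ∑ z', ∑ y', qU u * qX u x' * qZ x' z' * qY z' u y')
      = ∑ u, qU u * qX u x' := by
    intro x'
    refine Finset.sum_congr rfl fun u _ => ?_
    have h1 : ∀ z', (∑ y', qU u * qX u x' * qZ x' z' * qY z' u y')
        = qU u * qX u x' * qZ x' z' := by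
      intro z'
      have : (∑ y', qU u * qX u x' * qZ x' z' * qY z' u y')
          = qU u * qX u x' * qZ x' z' * ∑ y', qY z' u y' := by
        rw [Finset.mul_sum]
      rw [this, hYsum, mul_one]
    simp_rw [h1]
    have : (∑ z', qU u * qX u x' * qZ x' z') = qU u * qX u x' * ∑ z', qZ x' z' := by
      rw [Finset.mul_sum]
    rw [this, hZsum, mul_one]
  have hpos : ∀ x', 0 < qZ x' z ∧ 0 < ∑ u, qU u * qX u x' := by
    intro x'
    have h := hz x'
    rw [keyD] at h
    have hS : 0 ≤ ∑ u, qU u * qX u x' :=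
      Finset.sum_nonneg fun u _ => mul_nonneg (hqU u) (hqX u x')
    rcases mul_pos_iff.mp h with ⟨h1, h2⟩ | ⟨h1, h2⟩
    · exact ⟨h1, h2⟩
    · linarith [hqZ x' z]
  have term : ∀ x', ((∑ u, qU u * qX u x' * qZ x' z * qY z u y) /
               (∑ u, ∑ y', qU u * qX u x' * qZ x' z * qY z u y')) *
        (∑ u, ∑ z', ∑ y', qU u * qX u x' * qZ x' z' * qY z' u y')
      = ∑ u, qU u * qX u x' * qY z u y := by
    intro x'
    obtain ⟨h1, h2⟩ := hpos x'
    rw [keyN, keyD, keyP, mul_div_mul_left _ _ (ne_of_gt h1),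
      div_mul_cancel₀ _ (ne_of_gt h2)]
  rw [Finset.sum_comm]
  exact (Finset.sum_congr rfl fun x' _ => (term x').symm)
end

section
/- In the graph U → X → Z → Y with confounder U → Y (U unobserved), for every x, z with qZ(x, z) > 0 and every y, the mixed conditional P(y | z, do(x)) := P(z, y | do(x)) / P(z | do(x)) equals P(y | do(z)) := Σ_{u,x'} qU(u) · qX(u, x') · qY(z, u, y). -/
open scoped BigOperators

/-- In the graph `U → X → Z → Y` with confounder `U → Y` (`U` unobserved), for every
`x`, `z` with `qZ x z > 0` and every `y`, the mixed conditional
`P(y | z, do(x)) = P(z, y | do(x)) / P(z | do(x))` equals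
`P(y | do(z)) = Σ_{u,x'} qU u * qX u x' * qY z u y`. -/
theorem mixed_conditional_equals_do_z
    {U X Z Y : Type*} [Fintype U] [Fintype X] [Fintype Z] [Fintype Y]
    [Nonempty U] [Nonempty X] [Nonempty Z] [Nonempty Y]
    (qU : U → ℝ) (qX : U → X → ℝ) (qZ : X → Z → ℝ) (qY : Z → U → Y → ℝ)
    (hqU : ∀ u, 0 ≤ qU u) (hqX : ∀ u x, 0 ≤ qX u x)
    (hqZ : ∀ x z, 0 ≤ qZ x z) (hqY : ∀ z u y, 0 ≤ qY z u y)
    (hUsum : ∑ u, qU u = 1)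
    (hXsum : ∀ u, ∑ x, qX u x = 1)
    (hZsum : ∀ x, ∑ z, qZ x z = 1)
    (hYsum : ∀ z u, ∑ y, qY z u y = 1)
    (x : X) (z : Z) (hz : 0 < qZ x z) (y : Y) :
    (∑ u, qU u * qZ x z * qY z u y) /
        (∑ y', ∑ u, qU u * qZ x z * qY z u y') =
      ∑ u, ∑ x', qU u * qX u x' * qY z u y := by
  have hden : (∑ y', ∑ u, qU u * qZ x z * qY z u y') = qZ x z := by
    rw [Finset.sum_comm]
    have : ∀ u, ∑ y', qU u * qZ x z * qY z u y' = qU u * qZ x z := by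
      intro u
      rw [← Finset.mul_sum, hYsum z u, mul_one]
    simp_rw [this, ← Finset.sum_mul, hUsum, one_mul]
  have hrhs : (∑ u, ∑ x', qU u * qX u x' * qY z u y) = ∑ u, qU u * qY z u y := by
    refine Finset.sum_congr rfl fun u _ => ?_
    have : ∀ x', qU u * qX u x' * qY z u y = qX u x' * (qU u * qY z u y) := by
      intro x'; ring
    simp_rw [this, ← Finset.sum_mul, hXsum u, one_mul]
  have hnum : (∑ u, qU u * qZ x z * qY z u y) = qZ x z * ∑ u, qU u * qY z u y := by
    rw [Finset.mul_sum]; refine Finset.sum_congr rfl fun u _ => by ring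
  rw [hden, hrhs, hnum, mul_comm, mul_div_assoc, div_self hz.ne', mul_one]
end

section
/- Non-identifiability of the bow graph: there exist two functional causal models for the graph X → Y with an unobserved confounder U → X, U → Y — that is, two triples (qU, qX, qY) and (qU', qX', qY') of nonnegative kernels on finite types, each with the appropriate sums equal to 1 — whose observational joint distributions over (X, Y) agree, i.e. Σ_u qU(u)·qX(u,x)·qY(u,x,y) = Σ_u qU'(u)·qX'(u,x)·qY'(u,x,y) for all x, y, but whose interventional distributions differ: Σ_u qU(u)·qY(u,x,y) ≠ Σ_u qU'(u)·qY'(u,x,y) for some x, y. In particular the causal effect of X on Y is not identifiable from the observational distribution in this graph. -/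
open scoped BigOperators

/-- Non-identifiability of the bow graph `X → Y` with unobserved confounder
`U → X`, `U → Y`: there exist two functional causal models whose observational
distributions over `(X, Y)` agree but whose interventional distributions
`P(y | do(x))` differ. -/
theorem bow_graph_not_identifiable :
    ∃ (qU qU' : Bool → ℝ) (qX qX' : Bool → Bool → ℝ)
      (qY qY' : Bool → Bool → Bool → ℝ),
      (∀ u, 0 ≤ qU u) ∧ (∀ u x, 0 ≤ qX u x) ∧ (∀ u x y, 0 ≤ qY u x y) ∧
      (∀ u, 0 ≤ qU' u) ∧ (∀ u x, 0 ≤ qX' u x) ∧ (∀ u x y, 0 ≤ qY' u x y) ∧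
      (∑ u, qU u = 1) ∧ (∀ u, ∑ x, qX u x = 1) ∧ (∀ u x, ∑ y, qY u x y = 1) ∧
      (∑ u, qU' u = 1) ∧ (∀ u, ∑ x, qX' u x = 1) ∧ (∀ u x, ∑ y, qY' u x y = 1) ∧
      (∀ x y, ∑ u, qU u * qX u x * qY u x y = ∑ u, qU' u * qX' u x * qY' u x y) ∧
      (∃ x y, ∑ u, qU u * qY u x y ≠ ∑ u, qU' u * qY' u x y) := by
  refine ⟨fun _ => 1/2, fun _ => 1/2, fun _ _ => 1/2,
    fun u x => if x = u then 1 else 0,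
    fun _ x y => if y = x then 1 else 0,
    fun u _ y => if y = u then 1 else 0,
    ?_, ?_, ?_, ?_, ?_, ?_, ?_, ?_, ?_, ?_, ?_, ?_, ?_, ?_⟩
  · intro u; norm_num
  · intro u x; norm_num
  · intro u x y; dsimp only; split <;> norm_num
  · intro u; norm_num
  · intro u x; dsimp only; split <;> norm_num
  · intro u x y; dsimp only; split <;> norm_num
  · simp [Fintype.sum_bool]
  · intro u; simp [Fintype.sum_bool]
  · intro u x; cases x <;> simp [Fintype.sum_bool]
  · simp [Fintype.sum_bool]
  · intro u; cases u <;> simp [Fintype.sum_bool]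
  · intro u x; cases u <;> simp [Fintype.sum_bool]
  · intro x y; cases x <;> cases y <;> simp [Fintype.sum_bool]
  · refine ⟨true, true, ?_⟩
    simp [Fintype.sum_bool]
end

section
/- Non-identifiability of the pricing graph: there exist two functional causal models for the graph with edges U → X, U → Z, X → Z, X → Y, Z → Y and U unobserved — that is, two quadruples (qU, qX, qZ, qY) and (qU', qX', qZ', qY') of nonnegative kernels on finite types, each with the appropriate sums equal to 1 — whose observational joint distributions over (X, Z, Y) agree, i.e. Σ_u qU(u)·qX(u,x)·qZ(u,x,z)·qY(x,z,y) = Σ_u qU'(u)·qX'(u,x)·qZ'(u,x,z)·qY'(x,z,y) for all x, z, y, but whose interventional distributions differ: Σ_{u,z} qU(u)·qZ(u,x,z)·qY(x,z,y) ≠ Σ_{u,z} qU'(u)·qZ'(u,x,z)·qY'(x,z,y) for some x, y. In particular the causal effect of X on Y is not identifiable from the observational distribution in this graph. -/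
open scoped BigOperators

/-- Non-identifiability of the pricing graph with edges `U → X`, `U → Z`, `X → Z`,
`X → Y`, `Z → Y` and `U` unobserved: there exist two functional causal models whose
observational distributions over `(X, Z, Y)` agree but whose interventional
distributions `P(y | do(x))` differ. -/
theorem pricing_graph_not_identifiable :
    ∃ (qU qU' : Bool → ℝ) (qX qX' : Bool → Bool → ℝ)
      (qZ qZ' : Bool → Bool → Bool → ℝ) (qY qY' : Bool → Bool → Bool → ℝ),
      (∀ u, 0 ≤ qU u) ∧ (∀ u x, 0 ≤ qX u x) ∧
      (∀ u x z, 0 ≤ qZ u x z) ∧ (∀ x z y, 0 ≤ qY x z y) ∧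
      (∀ u, 0 ≤ qU' u) ∧ (∀ u x, 0 ≤ qX' u x) ∧
      (∀ u x z, 0 ≤ qZ' u x z) ∧ (∀ x z y, 0 ≤ qY' x z y) ∧
      (∑ u, qU u = 1) ∧ (∀ u, ∑ x, qX u x = 1) ∧
      (∀ u x, ∑ z, qZ u x z = 1) ∧ (∀ x z, ∑ y, qY x z y = 1) ∧
      (∑ u, qU' u = 1) ∧ (∀ u, ∑ x, qX' u x = 1) ∧
      (∀ u x, ∑ z, qZ' u x z = 1) ∧ (∀ x z, ∑ y, qY' x z y = 1) ∧
      (∀ x z y, ∑ u, qU u * qX u x * qZ u x z * qY x z y =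
        ∑ u, qU' u * qX' u x * qZ' u x z * qY' x z y) ∧
      (∃ x y, (∑ u, ∑ z, qU u * qZ u x z * qY x z y) ≠
        ∑ u, ∑ z, qU' u * qZ' u x z * qY' x z y) := by
  refine ⟨fun _ => 1/2, fun _ => 1/2,
    fun u x => if x = u then 1 else 0, fun u x => if x = u then 1 else 0,
    fun u _ z => if z = u then 1 else 0, fun _ x z => if z = x then 1 else 0,
    fun _ z y => if y = z then 1 else 0, fun _ z y => if y = z then 1 else 0,
    ?_, ?_, ?_, ?_, ?_, ?_, ?_, ?_, ?_, ?_, ?_, ?_, ?_, ?_, ?_, ?_, ?_, ?_⟩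
  all_goals try (intros; positivity)
  all_goals try (intros; norm_num [Fintype.sum_bool])
  · rename_i x z y
    cases x <;> cases z <;> cases y <;> norm_num
end
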